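/- For a Gaussian random variable X₁ ~ N(μ, σ²), the truncated variance c ↦ Var[X₁ | X₁ ≤ c] is strictly increasing in c and satisfies 0 < Var[X₁ | X₁ ≤ c] < σ² for every c ∈ ℝ. -/

import Mathlib

open MeasureTheory Set

/-- Gaussian density with mean `a` and variance `s2`. -/
noncomputable def gauss (a s2 x : ℝ) : ℝ :=
  (Real.sqrt (2 * Real.pi * s2))⁻¹ * Real.exp (-(x - a) ^ 2 / (2 * s2))

/-- Mean of a `N(a, s2)` random variable truncated above at `c`, i.e. `E[X | X ≤ c]`. -/
noncomputable def truncMean (a s2 c : ℝ) : ℝ :=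
  (∫ x in Iic c, x * gauss a s2 x) / (∫ x in Iic c, gauss a s2 x)

/-- Variance of a `N(a, s2)` random variable truncated above at `c`, i.e. `Var[X | X ≤ c]`. -/
noncomputable def truncVar (a s2 c : ℝ) : ℝ :=
  (∫ x in Iic c, x ^ 2 * gauss a s2 x) / (∫ x in Iic c, gauss a s2 x) - truncMean a s2 c ^ 2


open Filter intervalIntegral



/-- Sharp tail bound: `∫_0^r e^{-βt²} < 3r e^{-βr²}/(3-2βr²)` when `2βr² < 3`. -/
lemma psi_tail_bound {β r : ℝ} (hβ : 0 < β) (hr : 0 < r) (h3 : 2*β*r^2 < 3) :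
    ∫ t in (0:ℝ)..r, Real.exp (-(β*t^2)) < 3*r*Real.exp (-(β*r^2)) / (3 - 2*β*r^2) := by
  set e : ℝ → ℝ := fun t => Real.exp (-(β*t^2)) with he
  have hecont : Continuous e := by
    apply Real.continuous_exp.comp
    continuity
  set F : ℝ → ℝ := fun x => 3*x*Real.exp (-(β*x^2)) / (3 - 2*β*x^2) - ∫ t in (0:ℝ)..x, e t
    with hF
  have hFd : ∀ x, 0 ≤ x → 2*β*x^2 < 3 →
      HasDerivAt F (8*β^2*x^4*Real.exp (-(β*x^2))/(3-2*β*x^2)^2) x := by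
    intro x _ hx3
    have hm : 3 - 2*β*x^2 ≠ 0 := by nlinarith
    have h1 : HasDerivAt (fun y : ℝ => -(β*y^2)) (-(β*(2*x))) x := by
      have := ((hasDerivAt_pow 2 x).const_mul β).neg
      simpa [Pi.neg_def] using this
    have h2 : HasDerivAt (fun y : ℝ => Real.exp (-(β*y^2))) (-(β*(2*x)) * Real.exp (-(β*x^2))) x := by
      simpa [mul_comm] using h1.exp
    have h3' : HasDerivAt (fun y : ℝ => 3*y*Real.exp (-(β*y^2)))
        (3*Real.exp (-(β*x^2)) + 3*x*(-(β*(2*x)) * Real.exp (-(β*x^2)))) x := by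
      have := ((hasDerivAt_id x).const_mul (3:ℝ)).mul h2
      simpa [Pi.mul_def, mul_comm, mul_assoc, mul_left_comm] using this
    have h4 : HasDerivAt (fun y : ℝ => 3 - 2*β*y^2) (-(2*β*(2*x))) x := by
      have := (((hasDerivAt_pow 2 x).const_mul (2*β)).const_sub (3:ℝ))
      simpa using this
    have h5 := h3'.div h4 hm
    have h6 : HasDerivAt (fun y : ℝ => ∫ t in (0:ℝ)..y, e t) (e x) x := by
      exact integral_hasDerivAt_right (hecont.intervalIntegrable _ _)
        (hecont.stronglyMeasurableAtFilter _ _) hecont.continuousAt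
    have h7 := h5.sub h6
    refine h7.congr_deriv ?_
    simp only [he]
    have hD : (3 - 2*β*x^2)^2 ≠ 0 := pow_ne_zero 2 hm
    apply mul_right_cancel₀ hD
    rw [sub_mul, div_mul_cancel₀ _ hD, div_mul_cancel₀ _ hD]
    ring
  -- strict monotonicity on Icc 0 r
  have hmono : StrictMonoOn F (Icc 0 r) := by
    apply strictMonoOn_of_deriv_pos (convex_Icc 0 r)
    · -- continuity
      intro x hx
      have hx3 : 2*β*x^2 < 3 := by
        rcases hx with ⟨hx0, hxr⟩
        have : x^2 ≤ r^2 := pow_le_pow_left₀ hx0 hxr 2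
        nlinarith
      exact ((hFd x hx.1 hx3).continuousAt).continuousWithinAt
    · intro x hx
      rw [interior_Icc] at hx
      have hx3 : 2*β*x^2 < 3 := by
        rcases hx with ⟨hx0, hxr⟩
        have : x^2 ≤ r^2 := pow_le_pow_left₀ hx0.le hxr.le 2
        nlinarith
      rw [(hFd x hx.1.le hx3).deriv]
      have hm : 0 < 3 - 2*β*x^2 := by nlinarith
      have hx0 : 0 < x := hx.1
      positivity
  have h0r : (0:ℝ) ∈ Icc (0:ℝ) r := ⟨le_refl _, hr.le⟩
  have hrr : r ∈ Icc (0:ℝ) r := ⟨hr.le, le_refl _⟩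
  have := hmono h0r hrr hr
  simp only [hF] at this
  simp only [intervalIntegral.integral_same] at this
  norm_num at this
  linarith





lemma gamma_pos {β r : ℝ} (hβ : 0 < β) (hr : 0 < r) :
    0 < ∫ t in (-r)..r, (r^2 - 3*t^2) * Real.exp (-(β*t^2)) := by
  set e : ℝ → ℝ := fun t => Real.exp (-(β*t^2)) with he
  have hecont : Continuous e := by
    apply Real.continuous_exp.comp; continuity
  have hpcont : Continuous fun t : ℝ => t^2 * e t := by continuity
  -- FTC : ∫_{-r}^{r} (t² e - e/(2β)) = -r e(r)/β
  have hanti : ∀ x : ℝ, HasDerivAt (fun t : ℝ => -(t * e t) / (2*β))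
      (x^2 * e x - e x / (2*β)) x := by
    intro x
    have h1 : HasDerivAt (fun y : ℝ => -(β*y^2)) (-(β*(2*x))) x := by
      have := ((hasDerivAt_pow 2 x).const_mul β).neg
      simpa [Pi.neg_def] using this
    have h2 : HasDerivAt e (-(β*(2*x)) * e x) x := by
      simpa [he, mul_comm] using h1.exp
    have h3 : HasDerivAt (fun t : ℝ => -(t * e t) / (2*β))
        (-(1 * e x + x * (-(β*(2*x)) * e x)) / (2*β)) x :=
      (((hasDerivAt_id x).mul h2).neg).div_const _
    convert h3 using 1
    field_simp
    ring
  have hftc : ∫ t in (-r)..r, (t^2 * e t - e t / (2*β))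
      = (-(r * e r) / (2*β)) - (-((-r) * e (-r)) / (2*β)) :=
    integral_eq_sub_of_hasDerivAt (fun x _ => hanti x)
      ((hpcont.sub (hecont.div_const _)).intervalIntegrable _ _)
  have herer : e (-r) = e r := by simp [he]
  have hsplit : ∫ t in (-r)..r, (t^2 * e t - e t / (2*β))
      = (∫ t in (-r)..r, t^2 * e t) - (∫ t in (-r)..r, e t) / (2*β) := by
    rw [integral_sub (hpcont.intervalIntegrable _ _) ((hecont.div_const _).intervalIntegrable _ _),
      intervalIntegral.integral_div]
  set E : ℝ := ∫ t in (-r)..r, e t with hE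
  have hS : ∫ t in (-r)..r, t^2 * e t = E / (2*β) - r * e r / β := by
    rw [hsplit, herer] at hftc
    have hβ' : β ≠ 0 := ne_of_gt hβ
    linear_combination hftc
  have hEpos : 0 < E := by
    apply intervalIntegral.intervalIntegral_pos_of_pos (hecont.intervalIntegrable _ _)
    · intro x; exact Real.exp_pos _
    · linarith
  have htarget : ∫ t in (-r)..r, (r^2 - 3*t^2) * e t
      = (r^2 - 3/(2*β)) * E + 3 * r * e r / β := by
    have hlin : ∀ t : ℝ, (r^2 - 3*t^2) * e t = r^2 * e t - 3 * (t^2 * e t) := by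
      intro t; ring
    simp_rw [hlin]
    rw [integral_sub (f := fun t => r^2 * e t) (g := fun t => 3 * (t^2 * e t)) ((continuous_const.mul hecont).intervalIntegrable _ _)
        ((continuous_const.mul hpcont).intervalIntegrable _ _),
      intervalIntegral.integral_const_mul, intervalIntegral.integral_const_mul, hS, ← hE]
    have hβ' : β ≠ 0 := ne_of_gt hβ
    field_simp
    ring
  rw [htarget]
  have herpos : 0 < e r := Real.exp_pos _
  rcases le_or_gt 3 (2*β*r^2) with hcase | hcase
  · have h1 : 0 ≤ r^2 - 3/(2*β) := by
      rw [sub_nonneg, div_le_iff₀ (by positivity)]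
      linarith
    have h2 : 0 < 3 * r * e r / β := by positivity
    nlinarith
  · -- E = 2 * ∫_0^r e, and use psi_tail_bound
    have hEeven : E = 2 * ∫ t in (0:ℝ)..r, e t := by
      have hsplit2 : E = (∫ t in (-r)..(0:ℝ), e t) + ∫ t in (0:ℝ)..r, e t :=
        (integral_add_adjacent_intervals (hecont.intervalIntegrable _ _)
          (hecont.intervalIntegrable _ _)).symm
      have hneg : ∫ t in (-r)..(0:ℝ), e t = ∫ t in (0:ℝ)..r, e t := by
        have := intervalIntegral.integral_comp_neg (a := (0:ℝ)) (b := r) e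
        simp only [neg_zero] at this
        rw [← this]
        congr 1
        funext x
        simp [he]
      rw [hsplit2, hneg]; ring
    have hpsi := psi_tail_bound hβ hr hcase
    rw [hEeven]
    have hcoef : r^2 - 3/(2*β) < 0 := by
      rw [sub_neg, lt_div_iff₀ (by positivity)]
      linarith
    have hkey : (r^2 - 3/(2*β)) * (2 * ∫ t in (0:ℝ)..r, e t)
        > (r^2 - 3/(2*β)) * (2 * (3*r*e r / (3 - 2*β*r^2))) := by
      apply mul_lt_mul_of_neg_left _ hcoef
      have : (0:ℝ) < 2 := by norm_num
      exact (mul_lt_mul_iff_right₀ this).mpr hpsi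
    have hval : (r^2 - 3/(2*β)) * (2 * (3*r*e r / (3 - 2*β*r^2))) = -(3 * r * e r / β) := by
      have hm : 3 - 2*β*r^2 ≠ 0 := by linarith
      field_simp
      have hm' : (3 - r^2*β*2)⁻¹ * (3 - r^2*β*2) = 1 := inv_mul_cancel₀ (by linarith)
      linear_combination (-1:ℝ) * hm'
    rw [hval] at hkey
    linarith

section GaussBasic




variable {a s2 : ℝ}

lemma gauss_pos (hs : 0 < s2) (x : ℝ) : 0 < gauss a s2 x := by
  unfold gauss
  have h1 : 0 < Real.sqrt (2 * Real.pi * s2) :=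
    Real.sqrt_pos.mpr (by positivity)
  positivity

lemma continuous_gauss : Continuous (gauss a s2) := by
  unfold gauss
  exact continuous_const.mul (Real.continuous_exp.comp (by continuity))

lemma hasDerivAt_gauss (hs : 0 < s2) (x : ℝ) :
    HasDerivAt (gauss a s2) (-((x - a)/s2) * gauss a s2 x) x := by
  unfold gauss
  have h1 : HasDerivAt (fun y : ℝ => -(y - a)^2 / (2*s2))
      (-(2*(x-a))/(2*s2)) x := by
    have h0 : HasDerivAt (fun y : ℝ => y - a) 1 x := (hasDerivAt_id x).sub_const a
    have h2 : HasDerivAt (fun y : ℝ => (y - a)^2) (2*(x-a)) x := by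
      have := h0.pow 2
      simpa [Pi.pow_def, mul_comm] using this
    simpa using (h2.neg.div_const (2*s2))
  have h3 := (h1.exp).const_mul (Real.sqrt (2 * Real.pi * s2))⁻¹
  refine h3.congr_deriv ?_
  have hs' : s2 ≠ 0 := ne_of_gt hs
  field_simp

lemma tendsto_gauss_atBot (hs : 0 < s2) :
    Tendsto (gauss a s2) atBot (nhds 0) := by
  unfold gauss
  rw [show (0:ℝ) = (Real.sqrt (2 * Real.pi * s2))⁻¹ * 0 by ring]
  apply Tendsto.const_mul
  apply Real.tendsto_exp_atBot.comp
  -- -(x-a)^2/(2 s2) → -∞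
  have h1 : Tendsto (fun x : ℝ => x - a) atBot atBot :=
    tendsto_atBot_add_const_right _ _ tendsto_id
  have h2 : Tendsto (fun x : ℝ => (x - a)^2) atBot atTop := by
    have := h1.atBot_mul_atBot₀ h1
    apply this.congr
    intro x; ring
  have h3 : Tendsto (fun x : ℝ => -(x - a)^2) atBot atBot := tendsto_neg_atTop_atBot.comp h2
  exact h3.atBot_div_const (by positivity)

lemma tendsto_mul_exp_aux (hs : 0 < s2) :
    Tendsto (fun y : ℝ => y * Real.exp (-((2*s2)⁻¹ * y^2))) atTop (nhds 0) := by
  have hb : 0 < (2*s2)⁻¹ := by positivity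
  have h := rpow_mul_exp_neg_mul_sq_isLittleO_exp_neg hb (1:ℝ)
  have hhalf : Tendsto (fun x : ℝ => Real.exp (-(1/2) * x)) atTop (nhds 0) := by
    apply Real.tendsto_exp_atBot.comp
    have h0 : Tendsto (fun x : ℝ => -x) atTop atBot := tendsto_neg_atTop_atBot
    have := h0.atBot_div_const (show (0:ℝ) < 2 by norm_num)
    apply this.congr
    intro x; ring
  have h2 := h.isBigO.trans_tendsto hhalf
  apply h2.congr
  intro y
  rw [Real.rpow_one]
  ring_nf

lemma tendsto_gauss_aux_atBot (hs : 0 < s2) :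
    Tendsto (fun x => (x - a) * gauss a s2 x) atBot (nhds 0) := by
  set C : ℝ := (Real.sqrt (2 * Real.pi * s2))⁻¹ with hC
  have hcomp : Tendsto (fun x : ℝ => a - x) atBot atTop := by
    have : Tendsto (fun x : ℝ => -x) atBot atTop := tendsto_neg_atBot_atTop
    simpa [sub_eq_add_neg] using tendsto_atTop_add_const_left atBot a this
  have key := (tendsto_mul_exp_aux hs).comp hcomp
  have key2 := key.const_mul (-C)
  rw [mul_zero] at key2
  apply key2.congr
  intro x
  unfold gauss
  rw [← hC]
  have : -(x - a)^2 / (2*s2) = -((2*s2)⁻¹ * (a-x)^2) := by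
    field_simp; ring
  rw [this]
  simp only [Function.comp_apply]
  ring

lemma gauss_shift (hs : 0 < s2) (y : ℝ) :
    gauss a s2 (y + a) = (Real.sqrt (2 * Real.pi * s2))⁻¹ * Real.exp (-((2*s2)⁻¹ * y^2)) := by
  unfold gauss
  congr 1
  rw [add_sub_cancel_right]
  congr 1
  field_simp

lemma integrable_pow_mul_gauss (hs : 0 < s2) (n : ℕ) :
    Integrable fun x => x^n * gauss a s2 x := by
  have hb : 0 < (2*s2)⁻¹ := by positivity
  have hbase : ∀ k : ℕ, Integrable fun y : ℝ => y^k * Real.exp (-((2*s2)⁻¹ * y^2)) := by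
    intro k
    have hk : (-1:ℝ) < (k:ℝ) := lt_of_lt_of_le neg_one_lt_zero (Nat.cast_nonneg k)
    have h := integrable_rpow_mul_exp_neg_mul_sq hb hk
    apply h.congr
    filter_upwards with y
    rw [Real.rpow_natCast]
    congr 1
    ring_nf
  set C : ℝ := (Real.sqrt (2 * Real.pi * s2))⁻¹ with hC
  have hFn : Integrable (fun y : ℝ => (y+a)^n * gauss a s2 (y + a)) := by
    have heq : (fun y : ℝ => (y+a)^n * gauss a s2 (y + a))
        = fun y : ℝ => ∑ k ∈ Finset.range (n+1),
            (C * (a^(n-k) * (n.choose k))) * (y^k * Real.exp (-((2*s2)⁻¹ * y^2))) := by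
      funext y
      rw [gauss_shift hs, add_pow, Finset.sum_mul]
      apply Finset.sum_congr rfl
      intro k _
      push_cast
      ring
    rw [heq]
    apply integrable_finset_sum
    intro k _
    exact (hbase k).const_mul _
  have := hFn.comp_sub_right a
  apply this.congr
  filter_upwards with x
  simp [sub_add_cancel]

lemma integrable_gauss (hs : 0 < s2) : Integrable (gauss a s2) := by
  have := integrable_pow_mul_gauss (a := a) hs 0
  simpa using this

lemma integrable_quad_gauss (hs : 0 < s2) (P Q R : ℝ) :
    Integrable fun x => (P * x^2 + Q * x + R) * gauss a s2 x := by
  have h0 := (integrable_gauss hs (a := a)).const_mul R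
  have h1 := (integrable_pow_mul_gauss hs (a := a) 1).const_mul Q
  have h2 := (integrable_pow_mul_gauss hs (a := a) 2).const_mul P
  have := (h2.add h1).add h0
  apply this.congr
  filter_upwards with x
  simp only [Pi.add_apply]
  ring

lemma integral_Iic_centered_gauss (hs : 0 < s2) (c : ℝ) :
    ∫ x in Iic c, (x - a) * gauss a s2 x = -s2 * gauss a s2 c := by
  have hint : IntegrableOn (fun x => (x - a) * gauss a s2 x) (Iic c) := by
    have := integrable_quad_gauss (a := a) hs 0 1 (-a)
    apply Integrable.integrableOn
    apply this.congr
    filter_upwards with x; ring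
  have hderiv : ∀ x ∈ Iic c, HasDerivAt (fun x => -s2 * gauss a s2 x)
      ((x - a) * gauss a s2 x) x := by
    intro x _
    have := (hasDerivAt_gauss (a := a) hs x).const_mul (-s2)
    refine this.congr_deriv ?_
    have : s2 ≠ 0 := ne_of_gt hs
    field_simp
  have htend : Tendsto (fun x => -s2 * gauss a s2 x) atBot (nhds 0) := by
    have := (tendsto_gauss_atBot (a := a) hs).const_mul (-s2)
    simpa using this
  have := integral_Iic_of_hasDerivAt_of_tendsto' hderiv hint htend
  rw [this]; ring

lemma integral_Iic_sq_centered_gauss (hs : 0 < s2) (c : ℝ) :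
    ∫ x in Iic c, (x - a)^2 * gauss a s2 x
      = s2 * (∫ x in Iic c, gauss a s2 x) - s2 * (c - a) * gauss a s2 c := by
  have hint0 : IntegrableOn (gauss a s2) (Iic c) := (integrable_gauss hs).integrableOn
  have hintc : IntegrableOn (fun x => (x - a)^2 * gauss a s2 x - s2 * gauss a s2 x) (Iic c) := by
    have := integrable_quad_gauss (a := a) hs 1 (-2*a) (a^2 - s2)
    apply Integrable.integrableOn
    apply this.congr
    filter_upwards with x; ring
  have hderiv : ∀ x ∈ Iic c, HasDerivAt (fun x => -s2 * ((x - a) * gauss a s2 x))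
      ((x - a)^2 * gauss a s2 x - s2 * gauss a s2 x) x := by
    intro x _
    have h1 : HasDerivAt (fun y : ℝ => y - a) 1 x := (hasDerivAt_id x).sub_const a
    have h2 := (h1.mul (hasDerivAt_gauss (a := a) hs x)).const_mul (-s2)
    refine h2.congr_deriv ?_
    have : s2 ≠ 0 := ne_of_gt hs
    field_simp
    ring
  have htend : Tendsto (fun x => -s2 * ((x - a) * gauss a s2 x)) atBot (nhds 0) := by
    have := (tendsto_gauss_aux_atBot (a := a) hs).const_mul (-s2)
    simpa using this
  have hres := integral_Iic_of_hasDerivAt_of_tendsto' hderiv hintc htend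
  have hsq : IntegrableOn (fun x => (x - a)^2 * gauss a s2 x) (Iic c) := by
    have := integrable_quad_gauss (a := a) hs 1 (-2*a) (a^2)
    apply Integrable.integrableOn
    apply this.congr
    filter_upwards with x; ring
  rw [integral_sub hsq (hint0.const_mul s2)] at hres
  rw [MeasureTheory.integral_const_mul] at hres
  rw [sub_zero] at hres
  linarith [hres]

lemma integral_Iic_pos {c : ℝ} {f : ℝ → ℝ} (hf : IntegrableOn f (Iic c))
    (h0 : ∀ x ∈ Iic c, 0 ≤ f x) (m : ℝ) (hpos : ∀ x, x < c → x ≠ m → 0 < f x) :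
    0 < ∫ x in Iic c, f x := by
  rw [setIntegral_pos_iff_support_of_nonneg_ae _ hf]
  · have hsub : Iio c \ {m} ⊆ Function.support f ∩ Iic c := by
      intro x hx
      rcases hx with ⟨hx1, hx2⟩
      rw [mem_Iio] at hx1
      refine ⟨?_, mem_Iic.mpr hx1.le⟩
      exact ne_of_gt (hpos x hx1 (by simpa using hx2))
    have h2 : volume (Iio c \ {m}) = ⊤ := by
      rw [measure_diff_null (by simp)]
      exact Real.volume_Iio
    refine lt_of_lt_of_le ?_ (measure_mono hsub)
    rw [h2]
    simp
  · rw [EventuallyLE, ae_restrict_iff' measurableSet_Iic]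
    filter_upwards with x hx
    exact h0 x hx

end GaussBasic



lemma measurableEmbedding_subRight' (d : ℝ) : MeasurableEmbedding (fun x : ℝ => x - d) :=
  (Homeomorph.subRight d).isClosedEmbedding.measurableEmbedding

lemma map_subRight_volume (d : ℝ) : Measure.map (fun x : ℝ => x - d) volume = volume := by
  simp_rw [sub_eq_add_neg]
  exact map_add_right_eq_self volume (-d)

lemma measurableEmbedding_constSub (c : ℝ) : MeasurableEmbedding (fun x : ℝ => c - x) :=
  (Homeomorph.subLeft c).isClosedEmbedding.measurableEmbedding

lemma map_constSub_volume (c : ℝ) : Measure.map (fun x : ℝ => c - x) volume = volume := by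
  have h1 : (fun x : ℝ => c - x) = (fun x : ℝ => c + x) ∘ (fun x : ℝ => -x) := by
    funext x; simp [sub_eq_add_neg]
  rw [h1, ← Measure.map_map (show Measurable fun x : ℝ => c + x by fun_prop) (show Measurable fun x : ℝ => -x by fun_prop)]
  have h2 : Measure.map (fun x : ℝ => -x) volume = volume := Measure.map_neg_eq_self volume
  rw [h2]
  exact map_add_left_eq_self volume c

lemma integral_shift (f : ℝ → ℝ) (d : ℝ) (s : Set ℝ) :
    ∫ x in (fun x : ℝ => x - d) ⁻¹' s, f (x - d) = ∫ y in s, f y := by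
  have := (measurableEmbedding_subRight' d).setIntegral_map (μ := volume) f s
  rw [map_subRight_volume] at this
  exact this.symm

lemma integral_Ioi_shift (f : ℝ → ℝ) (u : ℝ) :
    ∫ p in Ioi u, f (p - u) = ∫ v in Ioi 0, f v := by
  have h := integral_shift f u (Ioi 0)
  have hp : (fun x : ℝ => x - u) ⁻¹' (Ioi 0) = Ioi u := by
    ext x; simp [sub_pos]
  rwa [hp] at h

lemma integral_Ioo_shift (f : ℝ → ℝ) (d l h : ℝ) :
    ∫ x in Ioo l h, f (x - d) = ∫ t in Ioo (l - d) (h - d), f t := by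
  have h1 := integral_shift f d (Ioo (l - d) (h - d))
  have hp : (fun x : ℝ => x - d) ⁻¹' (Ioo (l - d) (h - d)) = Ioo l h := by
    ext x
    simp only [mem_preimage, mem_Ioo]
    constructor <;> intro hx <;> constructor <;> linarith [hx.1, hx.2]
  rwa [hp] at h1

lemma integral_Iic_reflect (f : ℝ → ℝ) (c : ℝ) :
    ∫ x in Iic c, f x = ∫ y in Ioi 0, f (c - y) := by
  have := (measurableEmbedding_constSub c).setIntegral_map (μ := volume) f (Iic c)
  rw [map_constSub_volume] at this
  have hp : (fun x : ℝ => c - x) ⁻¹' (Iic c) = Ici 0 := by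
    ext x; simp
  rw [hp] at this
  rw [this, ← MeasureTheory.integral_Ici_eq_integral_Ioi]

lemma integrable_reflect {f : ℝ → ℝ} (h : Integrable f) (c : ℝ) :
    Integrable (fun y => f (c - y)) := by
  have h2 : Integrable f (Measure.map (fun x : ℝ => c - x) volume)
      ↔ Integrable (f ∘ fun x : ℝ => c - x) volume :=
    (measurableEmbedding_constSub c).integrable_map_iff
  rw [map_constSub_volume] at h2
  exact h2.mp h

lemma integrableOn_comp_embedding {f : ℝ → ℝ} {s : Set ℝ} {g : ℝ → ℝ}
    (hg : MeasurableEmbedding g) (hmap : Measure.map g volume = volume)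
    (hs : MeasurableSet s) (h : IntegrableOn f s) :
    IntegrableOn (fun p => f (g p)) (g ⁻¹' s) := by
  unfold IntegrableOn at h ⊢
  rw [← hmap, Measure.restrict_map hg.measurable hs] at h
  exact (hg.integrable_map_iff).mp h

lemma integrableOn_shift {f : ℝ → ℝ} {s : Set ℝ} (hs : MeasurableSet s)
    (h : IntegrableOn f s) (d : ℝ) :
    IntegrableOn (fun p => f (p - d)) ((fun x : ℝ => x - d) ⁻¹' s) :=
  integrableOn_comp_embedding (measurableEmbedding_subRight' d) (map_subRight_volume d) hs h

lemma integrableOn_Ioi_shift {f : ℝ → ℝ} (h : IntegrableOn f (Ioi 0)) (u : ℝ) :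
    IntegrableOn (fun p => f (p - u)) (Ioi u) := by
  have := integrableOn_shift measurableSet_Ioi h u
  have hp : (fun x : ℝ => x - u) ⁻¹' (Ioi 0) = Ioi u := by
    ext x; simp [sub_pos]
  rwa [hp] at this

lemma integrableOn_Iic_reflect {f : ℝ → ℝ} {c : ℝ} (h : IntegrableOn f (Iic c)) :
    IntegrableOn (fun y => f (c - y)) (Ici 0) := by
  have := integrableOn_comp_embedding (measurableEmbedding_constSub c)
    (map_constSub_volume c) measurableSet_Iic h
  have hp : (fun x : ℝ => c - x) ⁻¹' (Iic c) = Ici 0 := by ext x; simp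
  rwa [hp] at this






lemma inner_pos {a s2 : ℝ} (hs : 0 < s2) (c : ℝ) {p : ℝ} (hp : 0 < p) :
    0 < ∫ u in Ioo 0 p,
      (2*u*(p-u) - (p-u)^2) * (gauss a s2 (c - u) * gauss a s2 (c - (p - u))) := by
  set Z : ℝ := (Real.sqrt (2 * Real.pi * s2))⁻¹ with hZ
  have hZpos : 0 < Z := by
    rw [hZ]
    have : 0 < Real.sqrt (2 * Real.pi * s2) := Real.sqrt_pos.mpr (by positivity)
    positivity
  set Cp : ℝ := Z^2 * Real.exp (-(p - 2*(c-a))^2 / (4*s2)) with hCp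
  have hCppos : 0 < Cp := by positivity
  set g : ℝ → ℝ := fun t => (p^2/4 + p*t - 3*t^2) * Real.exp (-(s2⁻¹ * t^2)) with hg
  have hprod : ∀ u : ℝ, gauss a s2 (c - u) * gauss a s2 (c - (p - u))
      = Cp * Real.exp (-(s2⁻¹ * (u - p/2)^2)) := by
    intro u
    have hmerge : ∀ A B : ℝ, (Z * Real.exp A) * (Z * Real.exp B) = Z^2 * Real.exp (A+B) := by
      intro A B; rw [Real.exp_add]; ring
    unfold gauss
    rw [← hZ, hmerge, hCp, mul_assoc, ← Real.exp_add]
    congr 1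
    rw [Real.exp_eq_exp]
    have hs' : s2 ≠ 0 := ne_of_gt hs
    field_simp
    ring
  have hptw : ∀ u : ℝ, (2*u*(p-u) - (p-u)^2) * (gauss a s2 (c - u) * gauss a s2 (c - (p - u)))
      = Cp * g (u - p/2) := by
    intro u
    rw [hprod u, hg]
    ring
  simp_rw [hptw]
  rw [MeasureTheory.integral_const_mul]
  have hshift := integral_Ioo_shift g (p/2) 0 p
  have h0 : (0:ℝ) - p/2 = -(p/2) := by ring
  have h1 : p - p/2 = p/2 := by ring
  rw [h0, h1] at hshift
  rw [hshift]
  have hIoo : ∫ t in Ioo (-(p/2)) (p/2), g t = ∫ t in (-(p/2))..(p/2), g t := by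
    rw [intervalIntegral.integral_of_le (by linarith), MeasureTheory.integral_Ioc_eq_integral_Ioo]
  rw [hIoo]
  -- split off odd part
  have hgsplit : ∀ t : ℝ, g t = ((p/2)^2 - 3*t^2) * Real.exp (-(s2⁻¹ * t^2))
      + p * (t * Real.exp (-(s2⁻¹ * t^2))) := by
    intro t; rw [hg]; ring
  have hcontE : Continuous fun t : ℝ => Real.exp (-(s2⁻¹ * t^2)) :=
    Real.continuous_exp.comp ((continuous_const.mul (continuous_pow 2)).neg)
  have hconta : Continuous fun t : ℝ => ((p/2)^2 - 3*t^2) * Real.exp (-(s2⁻¹ * t^2)) :=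
    (continuous_const.sub (continuous_const.mul (continuous_pow 2))).mul hcontE
  have hcontb : Continuous fun t : ℝ => t * Real.exp (-(s2⁻¹ * t^2)) :=
    continuous_id.mul hcontE
  have hsplit2 : ∫ t in (-(p/2))..(p/2), g t
      = (∫ t in (-(p/2))..(p/2), ((p/2)^2 - 3*t^2) * Real.exp (-(s2⁻¹ * t^2)))
        + p * ∫ t in (-(p/2))..(p/2), t * Real.exp (-(s2⁻¹ * t^2)) := by
    simp_rw [hgsplit]
    rw [intervalIntegral.integral_add (f := fun t => ((p/2)^2 - 3*t^2) * Real.exp (-(s2⁻¹ * t^2))) (g := fun t => p * (t * Real.exp (-(s2⁻¹ * t^2)))) (hconta.intervalIntegrable _ _)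
      ((continuous_const.mul hcontb).intervalIntegrable _ _),
      intervalIntegral.integral_const_mul]
  have hodd : ∫ t in (-(p/2))..(p/2), t * Real.exp (-(s2⁻¹ * t^2)) = 0 := by
    have hanti : ∀ x : ℝ, HasDerivAt (fun t : ℝ => -(s2/2) * Real.exp (-(s2⁻¹ * t^2)))
        (x * Real.exp (-(s2⁻¹ * x^2))) x := by
      intro x
      have h1 : HasDerivAt (fun y : ℝ => -(s2⁻¹ * y^2)) (-(s2⁻¹ * (2*x))) x := by
        have := ((hasDerivAt_pow 2 x).const_mul s2⁻¹).neg
        simpa [Pi.neg_def] using this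
      have h2 := (h1.exp).const_mul (-(s2/2))
      refine h2.congr_deriv ?_
      have hs' : s2 ≠ 0 := ne_of_gt hs
      field_simp
    have := intervalIntegral.integral_eq_sub_of_hasDerivAt (a := -(p/2)) (b := p/2)
      (fun x _ => hanti x) (hcontb.intervalIntegrable _ _)
    rw [this]
    simp [neg_sq]
  rw [hsplit2, hodd, mul_zero, add_zero]
  have hβ : 0 < s2⁻¹ := by positivity
  exact mul_pos hCppos (gamma_pos hβ (by linarith : 0 < p/2))





lemma core_ineq {a s2 : ℝ} (hs : 0 < s2) (c : ℝ) :
    (∫ y in Ioi (0:ℝ), gauss a s2 (c - y)) * (∫ y in Ioi (0:ℝ), y^2 * gauss a s2 (c - y))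
      < 2 * (∫ y in Ioi (0:ℝ), y * gauss a s2 (c - y))^2 := by
  set w : ℝ → ℝ := fun y => gauss a s2 (c - y) with hwdef
  have hw0 : ∀ y, 0 < w y := fun y => gauss_pos hs _
  have hwcont : Continuous w := continuous_gauss.comp (continuous_const.sub continuous_id)
  have hwInt : Integrable w := integrable_reflect (integrable_gauss hs) c
  have hw1Int : Integrable (fun y => y * w y) := by
    have hf := integrable_quad_gauss (a := a) hs 0 (-1) c
    have := integrable_reflect hf c
    apply this.congr
    filter_upwards with y
    show (0 * (c-y)^2 + (-1) * (c-y) + c) * gauss a s2 (c - y) = y * w y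
    rw [hwdef]
    ring
  have hw2Int : Integrable (fun y => y^2 * w y) := by
    have hf := integrable_quad_gauss (a := a) hs 1 (-2*c) (c^2)
    have := integrable_reflect hf c
    apply this.congr
    filter_upwards with y
    show (1 * (c-y)^2 + (-2*c) * (c-y) + c^2) * gauss a s2 (c - y) = y^2 * w y
    rw [hwdef]
    ring
  have hw1absInt : Integrable (fun y => |y| * w y) := by
    apply hw1Int.abs.congr
    filter_upwards with y
    rw [abs_mul, abs_of_pos (hw0 y)]
  set J : ℝ := ∫ y in Ioi (0:ℝ), y * w y with hJ
  set J2 : ℝ := ∫ y in Ioi (0:ℝ), y^2 * w y with hJ2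
  set Nw : ℝ := ∫ y in Ioi (0:ℝ), w y with hNw
  show Nw * J2 < 2 * J^2
  -- the kernel and the two-variable function
  set S : Set (ℝ × ℝ) := {z | 0 < z.1} ∩ {z | z.1 < z.2} with hS
  have hSmeas : MeasurableSet S :=
    ((measurableSet_lt measurable_const measurable_fst).inter
      (measurableSet_lt measurable_fst measurable_snd))
  set kk : ℝ × ℝ → ℝ :=
    fun z => (2*z.1*(z.2 - z.1) - (z.2 - z.1)^2) * (w z.1 * w (z.2 - z.1)) with hkk
  have hsubcont : Continuous fun z : ℝ × ℝ => z.2 - z.1 := continuous_snd.sub continuous_fst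
  have hkkcont : Continuous kk := by
    apply Continuous.mul
    · exact ((continuous_const.mul continuous_fst).mul hsubcont).sub (hsubcont.pow 2)
    · exact (hwcont.comp continuous_fst).mul (hwcont.comp hsubcont)
  set FF : ℝ × ℝ → ℝ := S.indicator kk with hFF
  have hFFmeas : AEStronglyMeasurable FF (volume.prod volume) :=
    (hkkcont.measurable.indicator hSmeas).aestronglyMeasurable
  -- integrability of FF via convolution-type dominating function
  have hmulapply : ∀ x y : ℝ, (ContinuousLinearMap.mul ℝ ℝ) x y = x * y := fun x y => rfl
  have conv1 : Integrable (fun z : ℝ × ℝ => (|z.1| * w z.1) * (|z.2 - z.1| * w (z.2 - z.1)))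
      (volume.prod volume) := by
    have h := hw1absInt.convolution_integrand (ContinuousLinearMap.mul ℝ ℝ) hw1absInt
    have h2 := h.swap
    apply h2.congr
    filter_upwards with z
    simp [Function.comp, hmulapply]
  have conv2 : Integrable (fun z : ℝ × ℝ => w z.1 * ((z.2 - z.1)^2 * w (z.2 - z.1)))
      (volume.prod volume) := by
    have h := hwInt.convolution_integrand (ContinuousLinearMap.mul ℝ ℝ) hw2Int
    have h2 := h.swap
    apply h2.congr
    filter_upwards with z
    simp [Function.comp, hmulapply]
  set Phi : ℝ × ℝ → ℝ := fun z =>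
    2 * ((|z.1| * w z.1) * (|z.2 - z.1| * w (z.2 - z.1)))
      + w z.1 * ((z.2 - z.1)^2 * w (z.2 - z.1)) with hPhi
  have hPhiInt : Integrable Phi (volume.prod volume) := (conv1.const_mul 2).add conv2
  have hbound : ∀ z : ℝ × ℝ, ‖FF z‖ ≤ Phi z := by
    intro z
    have hww : 0 < w z.1 * w (z.2 - z.1) := mul_pos (hw0 _) (hw0 _)
    have hPhiz : Phi z = (2 * |z.1| * |z.2 - z.1| + (z.2 - z.1)^2) * (w z.1 * w (z.2 - z.1)) := by
      rw [hPhi]; ring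
    by_cases hz : z ∈ S
    · rw [hFF, indicator_of_mem hz, hkk]
      rw [Real.norm_eq_abs, abs_mul, abs_of_pos hww]
      rw [hPhiz]
      apply mul_le_mul_of_nonneg_right _ hww.le
      calc |2*z.1*(z.2 - z.1) - (z.2 - z.1)^2|
          ≤ |2*z.1*(z.2 - z.1)| + |(z.2 - z.1)^2| := abs_sub _ _
        _ = 2 * |z.1| * |z.2 - z.1| + (z.2 - z.1)^2 := by
            rw [abs_mul, abs_mul, abs_sq]
            simp [abs_of_nonneg]
    · rw [hFF, indicator_of_notMem hz]
      rw [hPhiz]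
      simp only [norm_zero]
      positivity
  have hFFint : Integrable FF (volume.prod volume) :=
    Integrable.mono' hPhiInt hFFmeas (Filter.Eventually.of_forall hbound)
  -- Fubini swap
  set F : ℝ → ℝ → ℝ := fun u p => FF (u, p) with hF
  have huncurry : Function.uncurry F = FF := by
    funext z
    simp [Function.uncurry, hF]
  have hswap : ∫ u, ∫ p, F u p = ∫ p, ∫ u, F u p := by
    apply integral_integral_swap
    rw [huncurry]
    exact hFFint
  -- membership characterization
  have hmem : ∀ u p : ℝ, ((u, p) ∈ S) ↔ (0 < u ∧ u < p) := by
    intro u p; rw [hS]; simp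
  -- evaluate LHS
  have hLHS : ∫ u, ∫ p, F u p = 2 * J^2 - Nw * J2 := by
    have hinner : ∀ u : ℝ, (∫ p, F u p) = (Ioi (0:ℝ)).indicator
        (fun u => w u * (2*u*J - J2)) u := by
      intro u
      by_cases hu : 0 < u
      · have h1 : (fun p => F u p) = (Ioi u).indicator (fun p => kk (u, p)) := by
          funext p
          simp only [hF, hFF]
          by_cases hup : u < p
          · rw [indicator_of_mem ((hmem u p).mpr ⟨hu, hup⟩),
              indicator_of_mem (mem_Ioi.mpr hup)]
          · rw [indicator_of_notMem (fun hmem' => hup ((hmem u p).mp hmem').2),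
              indicator_of_notMem (fun h => hup (mem_Ioi.mp h))]
        rw [h1, MeasureTheory.integral_indicator measurableSet_Ioi]
        have h2 : ∫ p in Ioi u, kk (u, p) = ∫ v in Ioi 0, kk (u, v + u) := by
          have := integral_Ioi_shift (fun v => kk (u, v + u)) u
          rw [← this]
          congr 1
          funext p
          simp
        rw [h2]
        have h3 : ∀ v : ℝ, kk (u, v + u) = w u * (2*u*(v*w v) - v^2 * w v) := by
          intro v
          rw [hkk]
          simp only
          rw [add_sub_cancel_right]
          ring
        simp_rw [h3]
        rw [MeasureTheory.integral_const_mul]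
        rw [MeasureTheory.integral_sub ((hw1Int.integrableOn).const_mul (2*u))
          (hw2Int.integrableOn)]
        rw [MeasureTheory.integral_const_mul]
        rw [indicator_of_mem (mem_Ioi.mpr hu)]
        try rw [← hJ, ← hJ2]
        try ring
      · have h1 : (fun p => F u p) = fun _ => (0:ℝ) := by
          funext p
          simp only [hF, hFF]
          exact indicator_of_notMem (fun hmem' => hu ((hmem u p).mp hmem').1) _
        rw [h1]
        rw [MeasureTheory.integral_zero]
        rw [indicator_of_notMem (fun h => hu (mem_Ioi.mp h))]
    simp_rw [hinner]
    rw [MeasureTheory.integral_indicator measurableSet_Ioi]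
    have h4 : ∀ u : ℝ, w u * (2*u*J - J2) = (2*J) * (u * w u) - J2 * w u := by
      intro u; ring
    simp_rw [h4]
    rw [MeasureTheory.integral_sub ((hw1Int.integrableOn).const_mul (2*J))
      ((hwInt.integrableOn).const_mul J2)]
    rw [MeasureTheory.integral_const_mul, MeasureTheory.integral_const_mul]
    rw [← hJ, ← hNw]
    try ring
  -- evaluate RHS
  set iota : ℝ → ℝ := fun p => ∫ u in Ioo 0 p, kk (u, p) with hiota
  have hRHSinner : ∀ p : ℝ, (∫ u, F u p) = iota p := by
    intro p
    have h1 : (fun u => F u p) = (Ioo 0 p).indicator (fun u => kk (u, p)) := by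
      funext u
      simp only [hF, hFF]
      by_cases hup : u ∈ Ioo 0 p
      · rw [indicator_of_mem ((hmem u p).mpr ⟨hup.1, hup.2⟩), indicator_of_mem hup]
      · rw [indicator_of_notMem (fun hmem' => hup (mem_Ioo.mpr ((hmem u p).mp hmem')))]
        rw [indicator_of_notMem hup]
    rw [h1, MeasureTheory.integral_indicator measurableSet_Ioo]
    try simp only [hiota]
  have hiota0 : ∀ p : ℝ, p ≤ 0 → iota p = 0 := by
    intro p hp
    simp only [hiota]
    rw [Ioo_eq_empty (show ¬(0:ℝ) < p by linarith)]
    simp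
  have hiotapos : ∀ p : ℝ, 0 < p → 0 < iota p := by
    intro p hp
    simp only [hiota]
    have := inner_pos hs c hp (a := a) (s2 := s2)
    apply lt_of_lt_of_eq this
    try congr 1
    try funext u
    try simp only [hkk, hwdef]
  have hiotanonneg : ∀ p : ℝ, 0 ≤ iota p := by
    intro p
    rcases le_or_gt p 0 with h | h
    · rw [hiota0 p h]
    · exact (hiotapos p h).le
  have hiotaInt : Integrable iota := by
    have h := hFFint.integral_prod_right
    apply h.congr
    filter_upwards with p
    rw [← hRHSinner p]
  have hRHSpos : 0 < ∫ p, ∫ u, F u p := by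
    have heq : (fun p => ∫ u, F u p) = iota := funext hRHSinner
    rw [heq]
    have h1 : ∫ p in Ioi (0:ℝ), iota p ≤ ∫ p, iota p :=
      setIntegral_le_integral hiotaInt (Filter.Eventually.of_forall hiotanonneg)
    have h2 : 0 < ∫ p in Ioi (0:ℝ), iota p := by
      rw [setIntegral_pos_iff_support_of_nonneg_ae
        (Filter.Eventually.of_forall (fun p => hiotanonneg p) :
          0 ≤ᵐ[volume.restrict (Ioi 0)] iota) hiotaInt.integrableOn]
      have hsub : Ioi (0:ℝ) ⊆ Function.support iota ∩ Ioi 0 := by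
        intro p hp
        exact ⟨ne_of_gt (hiotapos p hp), hp⟩
      refine lt_of_lt_of_le ?_ (measure_mono hsub)
      simp [Real.volume_Ioi]
    linarith
  rw [hLHS] at hswap
  rw [← hswap] at hRHSpos
  linarith






noncomputable def Nf (a s2 c : ℝ) : ℝ := ∫ x in Iic c, gauss a s2 x
noncomputable def Af (a s2 c : ℝ) : ℝ := ∫ x in Iic c, x * gauss a s2 x
noncomputable def Bf (a s2 c : ℝ) : ℝ := ∫ x in Iic c, x^2 * gauss a s2 x

section
variable {a s2 : ℝ}

lemma intOn_xg (hs : 0 < s2) (c : ℝ) : IntegrableOn (fun x => x * gauss a s2 x) (Iic c) := by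
  apply Integrable.integrableOn
  have := integrable_quad_gauss (a := a) hs 0 1 0
  apply this.congr
  filter_upwards with x; ring

lemma intOn_x2g (hs : 0 < s2) (c : ℝ) : IntegrableOn (fun x => x^2 * gauss a s2 x) (Iic c) := by
  apply Integrable.integrableOn
  have := integrable_quad_gauss (a := a) hs 1 0 0
  apply this.congr
  filter_upwards with x; ring

lemma Nf_pos (hs : 0 < s2) (c : ℝ) : 0 < Nf a s2 c := by
  apply integral_Iic_pos (integrable_gauss hs).integrableOn
    (fun x _ => (gauss_pos hs x).le) 0
  intro x _ _
  exact gauss_pos hs x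

lemma Af_eq (hs : 0 < s2) (c : ℝ) :
    Af a s2 c = a * Nf a s2 c - s2 * gauss a s2 c := by
  have h1 : ∫ x in Iic c, (x - a) * gauss a s2 x
      = Af a s2 c - a * Nf a s2 c := by
    have heq : ∀ x : ℝ, (x - a) * gauss a s2 x
        = x * gauss a s2 x - a * gauss a s2 x := fun x => by ring
    simp_rw [heq]
    rw [MeasureTheory.integral_sub (intOn_xg hs c)
      (((integrable_gauss hs).integrableOn).const_mul a)]
    rw [MeasureTheory.integral_const_mul]
    rfl
  have h2 := integral_Iic_centered_gauss (a := a) hs c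
  rw [h1] at h2
  linarith
lemma Bf_eq (hs : 0 < s2) (c : ℝ) :
    Bf a s2 c = s2 * Nf a s2 c - s2 * (c - a) * gauss a s2 c
      + 2 * a * Af a s2 c - a^2 * Nf a s2 c := by
  have h1 : ∫ x in Iic c, (x - a)^2 * gauss a s2 x
      = Bf a s2 c - 2 * a * Af a s2 c + a^2 * Nf a s2 c := by
    have heq : ∀ x : ℝ, (x - a)^2 * gauss a s2 x
        = x^2 * gauss a s2 x - 2*a * (x * gauss a s2 x) + a^2 * gauss a s2 x := fun x => by ring
    simp_rw [heq]
    have hfint : Integrable (fun x => x^2 * gauss a s2 x - 2*a * (x * gauss a s2 x))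
        (volume.restrict (Iic c)) := (intOn_x2g hs c).sub ((intOn_xg hs c).const_mul (2*a))
    rw [MeasureTheory.integral_add hfint (((integrable_gauss hs).integrableOn).const_mul (a^2))]
    rw [MeasureTheory.integral_sub (intOn_x2g hs c) ((intOn_xg hs c).const_mul (2*a))]
    rw [MeasureTheory.integral_const_mul, MeasureTheory.integral_const_mul]
    show Bf a s2 c - 2*a * Af a s2 c + a^2 * Nf a s2 c = _
    ring
  have h2 := integral_Iic_sq_centered_gauss (a := a) hs c
  rw [h1] at h2
  show Bf a s2 c = s2 * Nf a s2 c - s2 * (c-a) * gauss a s2 c + 2*a*Af a s2 c - a^2 * Nf a s2 c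
  have : s2 * (∫ x in Iic c, gauss a s2 x) = s2 * Nf a s2 c := rfl
  rw [this] at h2
  linarith

lemma Jf_int (hs : 0 < s2) (c : ℝ) :
    ∫ x in Iic c, (c - x) * gauss a s2 x = c * Nf a s2 c - Af a s2 c := by
  have heq : ∀ x : ℝ, (c - x) * gauss a s2 x
      = c * gauss a s2 x - x * gauss a s2 x := fun x => by ring
  simp_rw [heq]
  rw [MeasureTheory.integral_sub (((integrable_gauss hs).integrableOn).const_mul c)
    (intOn_xg hs c)]
  rw [MeasureTheory.integral_const_mul]
  rfl

lemma J2f_int (hs : 0 < s2) (c : ℝ) :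
    ∫ x in Iic c, (c - x)^2 * gauss a s2 x
      = c^2 * Nf a s2 c - 2 * c * Af a s2 c + Bf a s2 c := by
  have heq : ∀ x : ℝ, (c - x)^2 * gauss a s2 x
      = c^2 * gauss a s2 x - 2*c * (x * gauss a s2 x) + x^2 * gauss a s2 x := fun x => by ring
  simp_rw [heq]
  have hfint : Integrable (fun x => c^2 * gauss a s2 x - 2*c * (x * gauss a s2 x))
      (volume.restrict (Iic c)) :=
    (((integrable_gauss hs).integrableOn).const_mul (c^2)).sub ((intOn_xg hs c).const_mul (2*c))
  rw [MeasureTheory.integral_add hfint (intOn_x2g hs c)]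
  rw [MeasureTheory.integral_sub (((integrable_gauss hs).integrableOn).const_mul (c^2))
    ((intOn_xg hs c).const_mul (2*c))]
  rw [MeasureTheory.integral_const_mul, MeasureTheory.integral_const_mul]
  show c^2 * Nf a s2 c - 2*c * Af a s2 c + Bf a s2 c = _
  ring

lemma Jf_pos (hs : 0 < s2) (c : ℝ) : 0 < c * Nf a s2 c - Af a s2 c := by
  rw [← Jf_int hs c]
  refine integral_Iic_pos ?_ ?_ c ?_
  · apply Integrable.integrableOn
    have := integrable_quad_gauss (a := a) hs 0 (-1) c
    apply this.congr
    filter_upwards with x; ring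
  · intro x hx
    have : 0 ≤ c - x := by simp at hx; linarith
    exact mul_nonneg this (gauss_pos hs x).le
  · intro x hx _
    exact mul_pos (by linarith) (gauss_pos hs x)

lemma BN_sub_A2_pos (hs : 0 < s2) (c : ℝ) :
    0 < Bf a s2 c * Nf a s2 c - (Af a s2 c)^2 := by
  set N := Nf a s2 c with hN
  set A := Af a s2 c with hA
  set B := Bf a s2 c with hB
  have hNpos : 0 < N := Nf_pos hs c
  set m : ℝ := A / N with hm
  have hvar : 0 < ∫ x in Iic c, (x - m)^2 * gauss a s2 x := by
    refine integral_Iic_pos ?_ ?_ m ?_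
    · apply Integrable.integrableOn
      have := integrable_quad_gauss (a := a) hs 1 (-2*m) (m^2)
      apply this.congr
      filter_upwards with x; ring
    · intro x _
      exact mul_nonneg (sq_nonneg _) (gauss_pos hs x).le
    · intro x _ hxm
      apply mul_pos _ (gauss_pos hs x)
      have : x - m ≠ 0 := sub_ne_zero.mpr hxm
      positivity
  have hexp : ∫ x in Iic c, (x - m)^2 * gauss a s2 x
      = B - 2 * m * A + m^2 * N := by
    have heq : ∀ x : ℝ, (x - m)^2 * gauss a s2 x
        = x^2 * gauss a s2 x - 2*m * (x * gauss a s2 x) + m^2 * gauss a s2 x := fun x => by ring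
    simp_rw [heq]
    have hfint : Integrable (fun x => x^2 * gauss a s2 x - 2*m * (x * gauss a s2 x))
        (volume.restrict (Iic c)) := (intOn_x2g hs c).sub ((intOn_xg hs c).const_mul (2*m))
    rw [MeasureTheory.integral_add hfint (((integrable_gauss hs).integrableOn).const_mul (m^2))]
    rw [MeasureTheory.integral_sub (intOn_x2g hs c) ((intOn_xg hs c).const_mul (2*m))]
    rw [MeasureTheory.integral_const_mul, MeasureTheory.integral_const_mul]
    show Bf a s2 c - 2*m*Af a s2 c + m^2 * Nf a s2 c = _
    ring
  rw [hexp] at hvar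
  have hval : B - 2*m*A + m^2*N = (B*N - A^2)/N := by
    rw [hm]
    field_simp
    ring
  rw [hval] at hvar
  have := mul_pos hvar hNpos
  rw [div_mul_cancel₀] at this
  · exact this
  · exact ne_of_gt hNpos

lemma core_Iic (hs : 0 < s2) (c : ℝ) :
    Nf a s2 c * (c^2 * Nf a s2 c - 2*c*Af a s2 c + Bf a s2 c)
      < 2 * (c * Nf a s2 c - Af a s2 c)^2 := by
  rw [← Jf_int hs c, ← J2f_int hs c]
  have hN : Nf a s2 c = ∫ y in Ioi (0:ℝ), gauss a s2 (c - y) :=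
    integral_Iic_reflect (gauss a s2) c
  have hJ : ∫ x in Iic c, (c - x) * gauss a s2 x
      = ∫ y in Ioi (0:ℝ), y * gauss a s2 (c - y) := by
    rw [integral_Iic_reflect (fun x => (c - x) * gauss a s2 x) c]
    congr 1
    funext y
    congr 1
    ring
  have hJ2 : ∫ x in Iic c, (c - x)^2 * gauss a s2 x
      = ∫ y in Ioi (0:ℝ), y^2 * gauss a s2 (c - y) := by
    rw [integral_Iic_reflect (fun x => (c - x)^2 * gauss a s2 x) c]
    congr 1
    funext y
    congr 1
    ring
  rw [hN, hJ, hJ2]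
  exact core_ineq hs c

lemma hasDerivAt_Iic_integral {h : ℝ → ℝ} (hcont : Continuous h)
    (hint : ∀ b : ℝ, IntegrableOn h (Iic b)) (c : ℝ) :
    HasDerivAt (fun x => ∫ t in Iic x, h t) (h c) c := by
  have key : ∀ x : ℝ, ∫ t in Iic x, h t
      = (∫ t in Iic (c-1), h t) + ∫ t in (c-1)..x, h t := by
    intro x
    have := intervalIntegral.integral_Iic_sub_Iic (hint (c-1)) (hint x)
    linarith
  rw [show (fun x => ∫ t in Iic x, h t)
    = fun x => (∫ t in Iic (c-1), h t) + ∫ t in (c-1)..x, h t from funext key]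
  exact (intervalIntegral.integral_hasDerivAt_right
    (hcont.intervalIntegrable _ _) (hcont.stronglyMeasurableAtFilter _ _)
    hcont.continuousAt).const_add _

lemma hasDerivAt_Nf (hs : 0 < s2) (c : ℝ) :
    HasDerivAt (Nf a s2) (gauss a s2 c) c :=
  hasDerivAt_Iic_integral continuous_gauss (fun b => (integrable_gauss hs).integrableOn) c

lemma hasDerivAt_Af (hs : 0 < s2) (c : ℝ) :
    HasDerivAt (Af a s2) (c * gauss a s2 c) c :=
  hasDerivAt_Iic_integral (continuous_id.mul continuous_gauss) (fun b => intOn_xg hs b) c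

lemma hasDerivAt_Bf (hs : 0 < s2) (c : ℝ) :
    HasDerivAt (Bf a s2) (c^2 * gauss a s2 c) c :=
  hasDerivAt_Iic_integral ((continuous_pow 2).mul continuous_gauss) (fun b => intOn_x2g hs b) c

lemma truncVar_eq (hs : 0 < s2) (c : ℝ) :
    truncVar a s2 c = (Bf a s2 c * Nf a s2 c - (Af a s2 c)^2) / (Nf a s2 c)^2 := by
  have hNpos : 0 < Nf a s2 c := Nf_pos hs c
  unfold truncVar truncMean
  show Bf a s2 c / Nf a s2 c - (Af a s2 c / Nf a s2 c)^2 = _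
  field_simp

/-- For `X₁ ~ N(μ, σ²)`, the truncated variance `c ↦ Var[X₁ | X₁ ≤ c]` is strictly
increasing in `c` and lies strictly between `0` and `σ²` for every `c`. -/
theorem truncated_variance_properties (μ σ : ℝ) (hσ : 0 < σ) :
    StrictMono (fun c => truncVar μ (σ ^ 2) c) ∧
    ∀ c : ℝ, 0 < truncVar μ (σ ^ 2) c ∧ truncVar μ (σ ^ 2) c < σ ^ 2 := by
  set a := μ
  set s2 := σ^2 with hs2
  have hs : 0 < s2 := by positivity
  constructor
  · -- strict monotonicity
    have hderiv : ∀ c : ℝ, HasDerivAt (fun c => truncVar a s2 c)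
        ((gauss a s2 c / (Nf a s2 c)^3) *
          (2*(c*Nf a s2 c - Af a s2 c)^2
            - Nf a s2 c * (c^2*Nf a s2 c - 2*c*Af a s2 c + Bf a s2 c))) c := by
      intro c
      have hNpos := Nf_pos (a := a) hs c
      have hN' := hasDerivAt_Nf (a := a) hs c
      have hA' := hasDerivAt_Af (a := a) hs c
      have hB' := hasDerivAt_Bf (a := a) hs c
      have hN2' : HasDerivAt (fun x => (Nf a s2 x)^2) (2 * Nf a s2 c * gauss a s2 c) c := by
        have := hN'.pow 2
        simpa [Pi.pow_def, mul_comm, mul_assoc] using this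
      have hM' : HasDerivAt (fun x => Af a s2 x / Nf a s2 x)
          ((c * gauss a s2 c * Nf a s2 c - Af a s2 c * gauss a s2 c) / (Nf a s2 c)^2) c :=
        hA'.div hN' (ne_of_gt hNpos)
      have hBdiv' : HasDerivAt (fun x => Bf a s2 x / Nf a s2 x)
          ((c^2 * gauss a s2 c * Nf a s2 c - Bf a s2 c * gauss a s2 c) / (Nf a s2 c)^2) c :=
        hB'.div hN' (ne_of_gt hNpos)
      have hMsq' : HasDerivAt (fun x => (Af a s2 x / Nf a s2 x)^2)
          (2 * (Af a s2 c / Nf a s2 c)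
            * ((c * gauss a s2 c * Nf a s2 c - Af a s2 c * gauss a s2 c) / (Nf a s2 c)^2)) c := by
        have := hM'.pow 2
        simpa [Pi.pow_def, mul_comm, mul_assoc] using this
      have hV' := hBdiv'.sub hMsq'
      have hVfun : (fun x => truncVar a s2 x)
          = fun x => Bf a s2 x / Nf a s2 x - (Af a s2 x / Nf a s2 x)^2 := by
        funext x
        unfold truncVar truncMean
        rfl
      rw [hVfun]
      refine hV'.congr_deriv ?_
      field_simp
      ring
    apply strictMono_of_deriv_pos
    intro c
    rw [(hderiv c).deriv]
    have h1 := core_Iic (a := a) hs c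
    have h2 := Nf_pos (a := a) hs c
    have h3 := gauss_pos (a := a) hs c
    apply mul_pos (by positivity)
    linarith
  · intro c
    have hNpos := Nf_pos (a := a) hs c
    have hBA := BN_sub_A2_pos (a := a) hs c
    constructor
    · rw [truncVar_eq hs c]
      positivity
    · rw [truncVar_eq hs c]
      rw [div_lt_iff₀ (by positivity)]
      -- s2 * N^2 - (B*N - A^2) = s2 * G * J > 0
      have hA := Af_eq (a := a) hs c
      have hB := Bf_eq (a := a) hs c
      have hJ := Jf_pos (a := a) hs c
      have hG := gauss_pos (a := a) hs c
      have hid : s2 * (Nf a s2 c)^2 - (Bf a s2 c * Nf a s2 c - (Af a s2 c)^2)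
          = s2 * gauss a s2 c * (c * Nf a s2 c - Af a s2 c) := by
        rw [hB, hA]
        ring
      have hpos : 0 < s2 * gauss a s2 c * (c * Nf a s2 c - Af a s2 c) := by positivity
      show Bf a s2 c * Nf a s2 c - (Af a s2 c)^2 < s2 * (Nf a s2 c)^2
      linarith
end
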